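/- If ũ_j = u_j (1+εH)/(1−εH+2ε u_j) with H = u_m, then ũ_j − u_j = ε u_j (H − ũ_j) + ε ũ_j (H − u_j), and moreover ũ_m = u_m; in particular H is a constant of motion of the map u ↦ ũ. -/

import Mathlib

/-- if `ũ_j = u_j (1+εH)/(1−εH+2εu_j)` with `H = u_m`, then
`ũ_j − u_j = ε u_j (H − ũ_j) + ε ũ_j (H − u_j)`, and `ũ_m = u_m`;
in particular `H` is a constant of motion of the map `u ↦ ũ`. -/
theorem kahan_u_implicit_and_H_preserved (m : ℕ) (ε : ℝ) (u : ℕ → ℝ)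
    (hden : ∀ j ≤ m, 1 - ε * u m + 2 * ε * u j ≠ 0) (h1 : 1 + ε * u m ≠ 0) :
    (∀ j ≤ m,
      u j * (1 + ε * u m) / (1 - ε * u m + 2 * ε * u j) - u j
        = ε * u j * (u m - u j * (1 + ε * u m) / (1 - ε * u m + 2 * ε * u j))
          + ε * (u j * (1 + ε * u m) / (1 - ε * u m + 2 * ε * u j)) * (u m - u j))
    ∧ u m * (1 + ε * u m) / (1 - ε * u m + 2 * ε * u m) = u m := by
  constructor
  · intro j hj
    have hd := hden j hj
    have hd' : 1 - ε * u m + u j * ε * 2 ≠ 0 := by rwa [show u j * ε * 2 = 2 * ε * u j by ring]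
    field_simp
    ring
  · have hd := hden m le_rfl
    have : (1 : ℝ) - ε * u m + 2 * ε * u m = 1 + ε * u m := by ring
    rw [this, mul_div_assoc, div_self h1, mul_one]
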